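/- arXiv:1607.00877 — 3 statements merged into one kernel-verified Lean document; each statement's English description precedes it below -/
import Mathlib

section
/- Let A, B ∈ ℂ[x,y] be homogeneous of degree d with gcd(A,B)=1. Suppose B(x,y) = (x − x₀y)^τ · P(x,y) − x₀·A(x,y) for some x₀ ∈ ℂ, integer τ ≥ 1, and homogeneous P of degree d−τ with P(x₀,1) ≠ 0. Then the polynomial D := A_x B_y − A_y B_x factors as D = −(x − x₀y)^{τ−1}·Q(x,y) with Q homogeneous and Q(x₀,1) = τ·P(x₀,1)·d·A(x₀,1). -/
open MvPolynomial

lemma deg2 (s : Fin 2 →₀ ℕ) : s.degree = s 0 + s 1 := by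
  rw [Finsupp.degree_apply, Finset.sum_subset (Finset.subset_univ s.support)]
  · simp [Fin.sum_univ_two]
  · intro i _ hi
    simpa using Finsupp.notMem_support_iff.mp hi

lemma pderiv_isHomog {φ : MvPolynomial (Fin 2) ℂ} {n : ℕ} (h : φ.IsHomogeneous n)
    (i : Fin 2) : (pderiv i φ).IsHomogeneous (n - 1) := by
  rw [← φ.support_sum_monomial_coeff, map_sum]
  apply IsHomogeneous.sum
  intro s hs
  rw [pderiv_monomial]
  rcases Nat.eq_zero_or_pos (s i) with h0 | h0
  · rw [h0]; simp [isHomogeneous_zero]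
  · apply isHomogeneous_monomial
    have hd : s.degree = n := by
      have := h (mem_support_iff.mp hs)
      rwa [Finsupp.degree_eq_weight_one]
    have hi : i = 0 ∨ i = 1 := by
      rcases i with ⟨(_|_|k), hk⟩ <;> first | (left; rfl) | (right; rfl) | omega
    have : (s - Finsupp.single i 1).degree = s.degree - 1 := by
      rw [deg2, deg2, Finsupp.tsub_apply, Finsupp.tsub_apply]
      rcases hi with rfl | rfl <;> simp [Finsupp.single_apply] <;> omega
    omega

lemma euler {φ : MvPolynomial (Fin 2) ℂ} {n : ℕ} (h : φ.IsHomogeneous n) :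
    X 0 * pderiv 0 φ + X 1 * pderiv 1 φ = C (n : ℂ) * φ := by
  conv_lhs => rw [← φ.support_sum_monomial_coeff]
  conv_rhs => rw [← φ.support_sum_monomial_coeff]
  rw [map_sum, map_sum, Finset.mul_sum, Finset.mul_sum, Finset.mul_sum, ← Finset.sum_add_distrib]
  apply Finset.sum_congr rfl
  intro s hs
  have hd : s.degree = n := by
    have := h (mem_support_iff.mp hs)
    rwa [Finsupp.degree_eq_weight_one]
  have key : ∀ i : Fin 2, X i * pderiv i (monomial s (coeff s φ)) =
      monomial s (coeff s φ * (s i : ℂ)) := by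
    intro i
    rw [pderiv_monomial, X, monomial_mul]
    rcases Nat.eq_zero_or_pos (s i) with h0 | h0
    · rw [h0]; simp
    · congr 1
      · rw [add_comm]
        have hle : Finsupp.single i 1 ≤ s := by rwa [Finsupp.single_le_iff]
        rw [tsub_add_cancel_of_le hle]
      · ring
  rw [key 0, key 1, C_mul_monomial, ← map_add]
  congr 1
  rw [← hd, deg2]
  push_cast
  ring

lemma hcast {f : MvPolynomial (Fin 2) ℂ} {m n : ℕ} (h : f.IsHomogeneous m) (e : m = n) :
    f.IsHomogeneous n := e ▸ h

lemma pderiv_of_homog0 {P : MvPolynomial (Fin 2) ℂ} (h : P.IsHomogeneous 0) (i : Fin 2) :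
    pderiv i P = 0 := by
  apply pderiv_eq_zero_of_notMem_vars
  rw [mem_vars]
  rintro ⟨s, hs, his⟩
  have hd : s.degree = 0 := by
    have := h (mem_support_iff.mp hs)
    rwa [Finsupp.degree_eq_weight_one]
  rw [Finsupp.degree_eq_zero_iff] at hd
  subst hd
  simp at his


/-- If `A, B` are coprime homogeneous of degree `d` with
`B = (x − x₀y)^τ·P − x₀·A`, `P` homogeneous of degree `d−τ`, `P(x₀,1) ≠ 0`,
then `A_x B_y − A_y B_x = −(x − x₀y)^{τ−1}·Q` with `Q` homogeneous and
`Q(x₀,1) = τ·P(x₀,1)·d·A(x₀,1)`. -/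
theorem stmt_3 (d τ : ℕ) (hτ : 1 ≤ τ) (hτd : τ ≤ d)
    (A B P : MvPolynomial (Fin 2) ℂ) (x₀ : ℂ)
    (hA : A.IsHomogeneous d) (hP : P.IsHomogeneous (d - τ))
    (hrel : IsRelPrime A B)
    (hB : B = (X 0 - C x₀ * X 1) ^ τ * P - C x₀ * A)
    (hP0 : eval ![x₀, 1] P ≠ 0) :
    ∃ Q : MvPolynomial (Fin 2) ℂ, Q.IsHomogeneous (2 * d - τ - 1) ∧
      pderiv 0 A * pderiv 1 B - pderiv 1 A * pderiv 0 B
        = -((X 0 - C x₀ * X 1) ^ (τ - 1) * Q) ∧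
      eval ![x₀, 1] Q = (τ : ℂ) * eval ![x₀, 1] P * (d : ℂ) * eval ![x₀, 1] A := by
  obtain ⟨k, rfl⟩ : ∃ k, τ = k + 1 := ⟨τ - 1, by omega⟩
  set L : MvPolynomial (Fin 2) ℂ := X 0 - C x₀ * X 1 with hLdef
  set Q : MvPolynomial (Fin 2) ℂ :=
    C ((k + 1 : ℕ) : ℂ) * P * (C x₀ * pderiv 0 A + pderiv 1 A)
      - L * (pderiv 0 A * pderiv 1 P - pderiv 1 A * pderiv 0 P) with hQdef
  have hAx := pderiv_isHomog hA 0
  have hAy := pderiv_isHomog hA 1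
  have hL1 : L.IsHomogeneous 1 :=
    (isHomogeneous_X ℂ 0).sub (hcast ((isHomogeneous_C _ x₀).mul (isHomogeneous_X ℂ 1)) (by omega))
  have hterm1 : (C ((k + 1 : ℕ) : ℂ) * P * (C x₀ * pderiv 0 A + pderiv 1 A)).IsHomogeneous
      (2 * d - (k + 1) - 1) := by
    refine hcast (((isHomogeneous_C _ _).mul hP).mul
      ((hcast ((isHomogeneous_C _ x₀).mul hAx) (by omega)).add hAy)) (by omega)
  have hterm2 : (L * (pderiv 0 A * pderiv 1 P - pderiv 1 A * pderiv 0 P)).IsHomogeneous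
      (2 * d - (k + 1) - 1) := by
    rcases eq_or_lt_of_le hτd with heq | hlt
    · have h0 : d - (k + 1) = 0 := by omega
      rw [h0] at hP
      rw [pderiv_of_homog0 hP 0, pderiv_of_homog0 hP 1]
      simpa using isHomogeneous_zero (Fin 2) ℂ _
    · have hPx := hcast (pderiv_isHomog hP 0) (show d - (k+1) - 1 = d - (k+1) - 1 from rfl)
      have hPy := hcast (pderiv_isHomog hP 1) (show d - (k+1) - 1 = d - (k+1) - 1 from rfl)
      refine hcast (hL1.mul ((hAx.mul hPy).sub (hAy.mul hPx))) (by omega)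
  refine ⟨Q, hterm1.sub hterm2, ?_, ?_⟩
  · have hd0 : pderiv 0 L = 1 := by simp [hLdef]
    have hd1 : pderiv 1 L = -C x₀ := by simp [hLdef]
    rw [hB, hQdef]
    simp only [map_sub, pderiv_mul, pderiv_pow, hd0, hd1, pderiv_C_mul, pderiv_C, Nat.add_sub_cancel, C_eq_coe_nat]
    push_cast
    ring
  · have hEuler := congrArg (eval ![x₀, 1]) (euler hA)
    have hLe : eval ![x₀, 1] L = 0 := by
      simp [hLdef]
    simp only [map_add, map_mul, eval_X, eval_C, Matrix.cons_val_zero, Matrix.cons_val_one,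
      Matrix.head_cons, one_mul] at hEuler
    rw [hQdef]
    simp only [map_sub, map_add, map_mul, eval_C, hLe, zero_mul, sub_zero]
    push_cast
    linear_combination ((k : ℂ) + 1) * eval ![x₀, 1] P * hEuler
end

section
/- Every rational map f : P¹(ℂ) → P¹(ℂ) of degree d ≥ 2 has at least one fixed point which is not a critical point of f. -/
open Polynomial

private lemma aux_P_eq_zero (F P : Polynomial ℂ) (hF : F ≠ 0)
    (hPdeg : P.natDegree < F.natDegree)
    (hroot : ∀ z : ℂ, F.eval z = 0 → P.eval z = 0 ∧ (derivative F).eval z ≠ 0) :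
    P = 0 := by
  classical
  have hnodup : F.roots.Nodup := by
    rw [Multiset.nodup_iff_count_le_one]
    intro z
    rw [count_roots]
    by_contra hlt
    push_neg at hlt
    rw [one_lt_rootMultiplicity_iff_isRoot hF] at hlt
    exact (hroot z hlt.1).2 hlt.2
  have hcard : Multiset.card F.roots = F.natDegree :=
    splits_iff_card_roots.mp (IsAlgClosed.splits F)
  have hscard : F.roots.toFinset.card = F.natDegree := by
    rw [Multiset.toFinset_card_of_nodup hnodup, hcard]
  refine eq_zero_of_natDegree_lt_card_of_eval_eq_zero' P F.roots.toFinset ?_ ?_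
  · intro z hz
    rw [Multiset.mem_toFinset, mem_roots hF] at hz
    exact (hroot z hz).1
  · rw [hscard]; exact hPdeg

/-- Every rational map `f = a/b` of degree `d ≥ 2` on `P¹(ℂ)` has a fixed point
which is not critical: either `∞` is a non-critical fixed point
(which for `deg a > deg b` means exactly `deg a = deg b + 1`), or there is
`z ∈ ℂ` with `f z = z` (i.e. `a z = z·b z`) at which the Wronskian
`a'b − ab'` does not vanish. -/
theorem stmt_5 (d : ℕ) (hd : 2 ≤ d) (a b : Polynomial ℂ)
    (hab : IsCoprime a b) (hdeg : max a.natDegree b.natDegree = d) :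
    a.natDegree = b.natDegree + 1 ∨
      ∃ z : ℂ, a.eval z = z * b.eval z ∧
        (derivative a * b - a * derivative b).eval z ≠ 0 := by
  by_contra hcon
  push_neg at hcon
  obtain ⟨h1, h2⟩ := hcon
  set F : Polynomial ℂ := a - X * b with hFdef
  set P : Polynomial ℂ := derivative a - X * derivative b with hPdef
  -- at a fixed point, b doesn't vanish
  have hbz : ∀ z : ℂ, a.eval z = z * b.eval z → b.eval z ≠ 0 := by
    intro z hz hb0
    obtain ⟨u, v, huv⟩ := hab
    have := congrArg (eval z) huv
    simp [hb0, hz] at this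
  -- pointwise facts at roots of F
  have hroot : ∀ z : ℂ, F.eval z = 0 → P.eval z = 0 ∧ (derivative F).eval z ≠ 0 := by
    intro z hz
    rw [hFdef] at hz
    simp only [eval_sub, eval_mul, eval_X, sub_eq_zero] at hz
    have hb := hbz z hz
    have hW := h2 z hz
    have hP : P.eval z = 0 := by
      have hmul : P.eval z * b.eval z = (derivative a * b - a * derivative b).eval z := by
        simp only [hPdef, eval_sub, eval_mul, eval_X]
        rw [hz]; ring
      rw [hW] at hmul
      exact (mul_eq_zero.mp hmul).resolve_right hb
    refine ⟨hP, ?_⟩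
    have hdF : derivative F = P - b := by
      rw [hFdef, hPdef]
      rw [derivative_sub, derivative_mul, derivative_X]
      ring
    rw [hdF, eval_sub, hP, zero_sub]
    exact neg_ne_zero.mpr hb
  -- case on degrees
  rcases le_or_gt a.natDegree b.natDegree with hm | hm
  · -- deg a ≤ deg b, so deg b = d
    have hk : b.natDegree = d := by omega
    have hbne : b ≠ 0 := by
      intro h0; rw [h0, natDegree_zero] at hk; omega
    have hcoef : F.coeff (d + 1) = -b.coeff d := by
      rw [hFdef, coeff_sub, coeff_X_mul,
        coeff_eq_zero_of_natDegree_lt (by omega : a.natDegree < d + 1)]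
      ring
    have hbd : b.coeff d ≠ 0 := by
      rw [← hk]; exact leadingCoeff_ne_zero.mpr hbne
    have hFc : F.coeff (d + 1) ≠ 0 := by rw [hcoef]; simpa using hbd
    have hFdeg : F.natDegree = d + 1 := by
      have hle : F.natDegree ≤ d + 1 := by
        refine (natDegree_sub_le _ _).trans ?_
        simp only [sup_le_iff, max_le_iff]
        constructor
        · omega
        · exact (natDegree_mul_le).trans (by simp [natDegree_X, hk]; omega)
      have hge : d + 1 ≤ F.natDegree := le_natDegree_of_ne_zero hFc
      omega
    have hF : F ≠ 0 := fun h0 => by simp [h0] at hFc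
    have hPdeg : P.natDegree < F.natDegree := by
      rw [hFdeg]
      have h1' : (derivative a).natDegree ≤ d - 1 := by
        have := natDegree_derivative_le a; omega
      have h2' : (X * derivative b).natDegree ≤ d := by
        refine (natDegree_mul_le).trans ?_
        have := natDegree_derivative_le b
        simp only [natDegree_X]
        omega
      have hmm := natDegree_sub_le (derivative a) (X * derivative b)
      rw [← hPdef] at hmm
      have : P.natDegree ≤ d := hmm.trans (max_le (by omega) h2')
      omega
    have hP0 : P = 0 := aux_P_eq_zero F P hF hPdeg hroot
    -- then derivative F = -b; compare coeff d
    have hdF : derivative F = -b := by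
      have : derivative F = P - b := by
        rw [hFdef, hPdef, derivative_sub, derivative_mul, derivative_X]; ring
      rw [this, hP0, zero_sub]
    have := congrArg (fun p => coeff p d) hdF
    simp only [coeff_derivative, coeff_neg, hcoef] at this
    have : (d : ℂ) * b.coeff d = 0 := by
      linear_combination -this
    rcases mul_eq_zero.mp this with h | h
    · have : (d : ℂ) ≠ 0 := Nat.cast_ne_zero.mpr (by omega)
      exact this h
    · exact hbd h
  · -- deg a > deg b, so deg a = d, and deg b ≤ d - 2
    have hmd : a.natDegree = d := by omega
    have hk : b.natDegree + 2 ≤ d := by omega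
    have hane : a ≠ 0 := by
      intro h0; rw [h0, natDegree_zero] at hmd; omega
    have hcoef : F.coeff d = a.coeff d := by
      obtain ⟨e, he⟩ : ∃ e, d = e + 1 := ⟨d - 1, by omega⟩
      rw [hFdef, coeff_sub, he, coeff_X_mul,
        coeff_eq_zero_of_natDegree_lt (by omega : b.natDegree < e)]
      ring
    have had : a.coeff d ≠ 0 := by
      rw [← hmd]; exact leadingCoeff_ne_zero.mpr hane
    have hFc : F.coeff d ≠ 0 := by rw [hcoef]; exact had
    have hFdeg : F.natDegree = d := by
      have hle : F.natDegree ≤ d := by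
        refine (natDegree_sub_le _ _).trans ?_
        simp only [max_le_iff]
        constructor
        · omega
        · exact (natDegree_mul_le).trans (by simp [natDegree_X]; omega)
      have hge : d ≤ F.natDegree := le_natDegree_of_ne_zero hFc
      omega
    have hF : F ≠ 0 := fun h0 => by simp [h0] at hFc
    have hPdeg : P.natDegree < F.natDegree := by
      rw [hFdeg]
      have h1' : (derivative a).natDegree ≤ d - 1 := by
        have := natDegree_derivative_le a; omega
      have h2' : (X * derivative b).natDegree ≤ d - 1 := by
        refine (natDegree_mul_le).trans ?_
        have := natDegree_derivative_le b
        simp only [natDegree_X]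
        omega
      have hmm := natDegree_sub_le (derivative a) (X * derivative b)
      rw [← hPdef] at hmm
      have : P.natDegree ≤ d - 1 := hmm.trans (max_le h1' h2')
      omega
    have hP0 : P = 0 := aux_P_eq_zero F P hF hPdeg hroot
    have hdF : derivative F = -b := by
      have : derivative F = P - b := by
        rw [hFdef, hPdef, derivative_sub, derivative_mul, derivative_X]; ring
      rw [this, hP0, zero_sub]
    have hc := congrArg (fun p => coeff p (d - 1)) hdF
    have hd1 : d - 1 + 1 = d := by omega
    simp only [coeff_derivative, coeff_neg, hd1, hcoef,
      coeff_eq_zero_of_natDegree_lt (by omega : b.natDegree < d - 1), neg_zero] at hc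
    have hdC : ((d - 1 : ℕ) : ℂ) + 1 ≠ 0 := by
      have : ((d - 1 : ℕ) : ℂ) + 1 = ((d - 1 + 1 : ℕ) : ℂ) := by push_cast; ring
      rw [this, hd1]
      exact Nat.cast_ne_zero.mpr (by omega)
    exact had (by
      rcases mul_eq_zero.mp hc with h | h
      · exact h
      · exact absurd h hdC)
end

section
/- Let A, B ∈ ℂ[x,y]₃ be homogeneous of degree 3 and let T = (ax+by = 0) be a line with (a,b) ≠ (0,0). Define P(x,y) = (A(x,y)·B(b,−a) − B(x,y)·A(b,−a))/(ax+by)², assumed polynomial (so P is homogeneous linear), and Q(x,y) = P_x·B(b,−a) − P_y·A(b,−a). Writing ã = A(b,−a), b̃ = B(b,−a) and C(x,y) = x·A(x,y) + y·B(x,y), if C(b,−a) ≠ 0 then Q(b,−a) = C(b̃, −ã)/(C(b,−a))². -/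
open MvPolynomial

lemma aux_cancel {σ : Type*} {q p : MvPolynomial σ ℂ} {m n : ℕ}
    (hq : q.IsHomogeneous m) (hq0 : q ≠ 0)
    (h : (q * p).IsHomogeneous (m + n)) : p.IsHomogeneous n := by
  have key : ∀ k, k ≠ n → homogeneousComponent k p = 0 := by
    intro k hk
    have h1 : q * homogeneousComponent k p = homogeneousComponent (m + k) (q * p) := by
      by_cases hkle : k ≤ p.totalDegree
      · conv_rhs => rw [← sum_homogeneousComponent p]
        rw [Finset.mul_sum, map_sum]
        rw [Finset.sum_congr rfl (fun j _ => homogeneousComponent_of_mem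
          (hq.mul (homogeneousComponent_isHomogeneous j p)))]
        rw [Finset.sum_eq_single k (fun j _ hj => if_neg (by omega)) (fun hnk => absurd (Finset.mem_range.mpr (Nat.lt_succ_of_le hkle)) hnk), if_pos rfl]
      · rw [homogeneousComponent_eq_zero _ _ (lt_of_not_ge hkle), mul_zero,
          homogeneousComponent_of_mem h, if_neg (by omega)]
    rw [homogeneousComponent_of_mem h, if_neg (by omega)] at h1
    rcases mul_eq_zero.mp h1 with h2 | h2
    · exact absurd h2 hq0
    · exact h2
  conv => rw [← sum_homogeneousComponent p]
  apply IsHomogeneous.sum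
  intro i _
  by_cases hi : i = n
  · exact hi ▸ homogeneousComponent_isHomogeneous i p
  · rw [key i hi]; exact isHomogeneous_zero _ _ _

lemma aux_deg1 (d : Fin 2 →₀ ℕ) (hdeg : Finsupp.degree d = 1) :
    d = Finsupp.single 0 1 ∨ d = Finsupp.single 1 1 := by
  have hsum : d 0 + d 1 = 1 := by
    have : ∑ i : Fin 2, d i = 1 := by
      rw [← hdeg, Finsupp.degree]
      exact (Finset.sum_subset (Finset.subset_univ _)
        (fun i _ hi => Finsupp.notMem_support_iff.mp hi)).symm
    rwa [Fin.sum_univ_two] at this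
  by_cases h0 : d 0 = 0
  · right
    ext i
    fin_cases i <;> simp [Finsupp.single_apply] <;> omega
  · left
    ext i
    fin_cases i <;> simp [Finsupp.single_apply] <;> omega

lemma aux_decomp {p : MvPolynomial (Fin 2) ℂ} (hp : p.IsHomogeneous 1) :
    p = C (coeff (Finsupp.single 0 1) p) * X 0 + C (coeff (Finsupp.single 1 1) p) * X 1 := by
  ext d
  rw [coeff_add, coeff_C_mul, coeff_C_mul, coeff_X', coeff_X']
  by_cases h0 : (Finsupp.single (0 : Fin 2) 1 : Fin 2 →₀ ℕ) = d
  · rw [if_pos h0, if_neg (by rw [← h0]; simp [Finsupp.single_eq_single_iff])]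
    simp [← h0]
  · rw [if_neg h0]
    by_cases h1 : (Finsupp.single (1 : Fin 2) 1 : Fin 2 →₀ ℕ) = d
    · rw [if_pos h1]; simp [← h1]
    · rw [if_neg h1]
      have : Finsupp.degree d ≠ 1 := by
        intro hdeg
        rcases aux_deg1 d hdeg with h | h
        · exact h0 h.symm
        · exact h1 h.symm
      simp [hp.coeff_eq_zero this]

/-- For homogeneous cubics `A, B`, a line `T = (ax+by=0)`, and
`P = (A·B(b,−a) − B·A(b,−a))/(ax+by)²`, setting `ã = A(b,−a)`, `b̃ = B(b,−a)`,
`Q = P_x·b̃ − P_y·ã` and `C(x,y) = xA + yB`, if `C(b,−a) ≠ 0` then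
`Q(b,−a) = C(b̃,−ã)/(C(b,−a))²`. -/
theorem stmt_9 (A B : MvPolynomial (Fin 2) ℂ)
    (hA : A.IsHomogeneous 3) (hB : B.IsHomogeneous 3)
    (a b : ℂ) (hab : (a, b) ≠ (0, 0))
    (P : MvPolynomial (Fin 2) ℂ)
    (hP : A * C (eval ![b, -a] B) - B * C (eval ![b, -a] A)
        = (C a * X 0 + C b * X 1) ^ 2 * P)
    (hC : eval ![b, -a] (X 0 * A + X 1 * B) ≠ 0) :
    eval ![b, -a] (pderiv 0 P * C (eval ![b, -a] B) - pderiv 1 P * C (eval ![b, -a] A))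
      = eval ![eval ![b, -a] B, -(eval ![b, -a] A)] (X 0 * A + X 1 * B)
        / (eval ![b, -a] (X 0 * A + X 1 * B)) ^ 2 := by
  have hl : ((C a * X 0 + C b * X 1 : MvPolynomial (Fin 2) ℂ)).IsHomogeneous 1 :=
    (isHomogeneous_C_mul_X a 0).add (isHomogeneous_C_mul_X b 1)
  have hl2 : (((C a * X 0 + C b * X 1) ^ 2 : MvPolynomial (Fin 2) ℂ)).IsHomogeneous 2 := by
    simpa using hl.pow 2
  have hlne : (C a * X 0 + C b * X 1 : MvPolynomial (Fin 2) ℂ) ≠ 0 := by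
    intro h
    have ha := congrArg (eval ![1, 0]) h
    have hb := congrArg (eval ![0, 1]) h
    simp at ha hb
    exact hab (Prod.ext ha hb)
  have hD : (((C a * X 0 + C b * X 1) ^ 2 * P : MvPolynomial (Fin 2) ℂ)).IsHomogeneous 3 := by
    rw [← hP]
    have h1 : (A * C (eval ![b, -a] B)).IsHomogeneous 3 := by
      rw [mul_comm]; simpa using (isHomogeneous_C _ _).mul hA
    have h2 : (B * C (eval ![b, -a] A)).IsHomogeneous 3 := by
      rw [mul_comm]; simpa using (isHomogeneous_C _ _).mul hB
    exact h1.sub h2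
  have hPh : P.IsHomogeneous 1 := aux_cancel hl2 (pow_ne_zero 2 hlne) hD
  have hPd := aux_decomp hPh
  set c0 := coeff (Finsupp.single 0 1) P
  set c1 := coeff (Finsupp.single 1 1) P
  set ta := eval ![b, -a] A with hta
  set tb := eval ![b, -a] B with htb
  have key := congrArg (eval ![tb, -ta]) hP
  rw [hPd] at key
  simp only [eval_sub, eval_add, eval_mul, eval_pow, eval_C, eval_X,
    Matrix.cons_val_zero, Matrix.cons_val_one, Matrix.head_cons] at key hC ⊢
  rw [hPd]
  have hp0 : pderiv 0 (C c0 * X 0 + C c1 * X 1 : MvPolynomial (Fin 2) ℂ) = C c0 := by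
    simp [pderiv_X]
  have hp1 : pderiv 1 (C c0 * X 0 + C c1 * X 1 : MvPolynomial (Fin 2) ℂ) = C c1 := by
    simp [pderiv_X]
  rw [hp0, hp1]
  simp only [eval_sub, eval_mul, eval_C]
  rw [← hta, ← htb] at hC ⊢
  rw [eq_div_iff (pow_ne_zero 2 hC)]
  linear_combination -key
end
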